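/- Define for x, x' ∈ ℝ³ and β > 0 the free heat kernel G_{0,∞}(x,x';β) = (2πβ)^{-3/2} exp(−|x−x'|²/(2β)), and for L ≥ 1 the cube kernel G_{0,L}(x,x';β) = Π_{j=1}³ g_{0,L}(x_j, x'_j; β), where g_{0,L}(x,x';β) = (2πβ)^{-1/2} Σ_{m∈ℤ}[exp(−(x−x'+2mL)²/(2β)) − exp(−(x+x'−2mL−L)²/(2β))]. Set Z_{0,L} = G_{0,L} − G_{0,∞}. Then there exist numerical constants c₁, c₂ > 0 such that for all L ≥ 1, β > 0 and x, x' in the open cube (−L/2, L/2)³: |Z_{0,L}(x, x'; β)| ≤ c₁ (1+β) G_{0,∞}(x, x'; c₂ β). -/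

import Mathlib

open Real

/-- The one-dimensional Dirichlet method-of-images heat kernel on `(−L/2, L/2)`. -/
noncomputable def g0L (L x x' β : ℝ) : ℝ :=
  (2 * π * β) ^ (-(1/2) : ℝ) *
    ∑' m : ℤ, (Real.exp (-(x - x' + 2 * m * L) ^ 2 / (2 * β)) -
      Real.exp (-(x + x' - 2 * m * L - L) ^ 2 / (2 * β)))

/-- The free heat kernel on `ℝ³`. -/
noncomputable def G0inf (x x' : Fin 3 → ℝ) (β : ℝ) : ℝ :=
  (2 * π * β) ^ (-(3/2) : ℝ) * Real.exp (-(∑ j, (x j - x' j) ^ 2) / (2 * β))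

/-- The Dirichlet heat kernel of the cube `(−L/2, L/2)³`. -/
noncomputable def G0L (L : ℝ) (x x' : Fin 3 → ℝ) (β : ℝ) : ℝ :=
  ∏ j, g0L L (x j) (x' j) β

/-- The boundary remainder `Z_{0,L} = G_{0,L} − G_{0,∞}`. -/
noncomputable def Z0L (L : ℝ) (x x' : Fin 3 → ℝ) (β : ℝ) : ℝ :=
  G0L L x x' β - G0inf x x' β


lemma summable_gaussZ {L β : ℝ} (c : ℝ) (hL : 0 < L) (hβ : 0 < β) (hc : |c| ≤ 2 * L) :
    Summable (fun m : ℤ => Real.exp (-(c + 2 * m * L) ^ 2 / (2 * β))) := by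
  have ha : 0 < L ^ 2 / β := by positivity
  set a : ℝ := L ^ 2 / β with ha_def
  have hr0 : (0:ℝ) ≤ Real.exp (-a) := (Real.exp_pos _).le
  have hr1 : Real.exp (-a) < 1 := Real.exp_lt_one_iff.mpr (by linarith)
  have hmaj : Summable (fun m : ℤ => Real.exp (2 * a) * Real.exp (-a) ^ m.natAbs) := by
    apply Summable.mul_left
    apply Summable.of_nat_of_neg
    · simpa using summable_geometric_of_lt_one hr0 hr1
    · simpa using summable_geometric_of_lt_one hr0 hr1
  apply Summable.of_nonneg_of_le (fun m => (Real.exp_pos _).le) _ hmaj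
  intro m
  rw [← Real.exp_nat_mul, ← Real.exp_add]
  apply Real.exp_le_exp.mpr
  have hc1 : -(2*L) ≤ c := neg_le_of_abs_le hc
  have hc2 : c ≤ 2*L := le_of_abs_le hc
  have key : 2 * ((m.natAbs : ℝ) - 2) * L ^ 2 ≤ (c + 2 * m * L) ^ 2 := by
    obtain ⟨n', rfl | rfl⟩ := Int.eq_nat_or_neg m
    · simp only [Int.natAbs_natCast]
      push_cast
      set n : ℝ := (n' : ℝ) with hn
      have hn0 : 0 ≤ n := Nat.cast_nonneg _
      rcases le_or_gt n 2 with h2 | h2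
      · nlinarith [sq_nonneg (c + 2 * n * L)]
      · nlinarith [mul_nonneg (show (0:ℝ) ≤ c + 2*L by linarith)
          (show (0:ℝ) ≤ (2*n-2)*L by nlinarith), sq_nonneg (n - 2), sq_nonneg L]
    · simp only [Int.natAbs_neg, Int.natAbs_natCast]
      push_cast
      set n : ℝ := (n' : ℝ) with hn
      have hn0 : 0 ≤ n := Nat.cast_nonneg _
      rcases le_or_gt n 2 with h2 | h2
      · nlinarith [sq_nonneg (c - 2 * n * L)]
      · nlinarith [mul_nonneg (show (0:ℝ) ≤ 2*L - c by linarith)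
          (show (0:ℝ) ≤ (2*n-2)*L by nlinarith), sq_nonneg (n - 2), sq_nonneg L]
  have hβ' : (0:ℝ) < 2 * β := by linarith
  have expand : 2 * a + (m.natAbs:ℝ) * (-a) = -(2 * ((m.natAbs:ℝ) - 2) * L ^ 2) / (2 * β) := by
    rw [ha_def]; field_simp; ring
  rw [expand]
  gcongr

lemma exp_term_le {β : ℝ} (hβ : 0 < β) {A B : ℝ} (h : B ^ 2 ≤ A ^ 2) :
    Real.exp (-A ^ 2 / (2 * β)) ≤ Real.exp (-B ^ 2 / (2 * β)) := by
  apply Real.exp_le_exp.mpr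
  gcongr

lemma g0L_abs_le {L β x x' : ℝ} (hL : 0 < L) (hβ : 0 < β)
    (hx : x ∈ Set.Ioo (-(L/2)) (L/2)) (hx' : x' ∈ Set.Ioo (-(L/2)) (L/2)) :
    |g0L L x x' β| ≤ (2 * π * β) ^ (-(1/2) : ℝ) * Real.exp (-(x - x') ^ 2 / (2 * β)) := by
  obtain ⟨hx1, hx2⟩ := hx
  obtain ⟨hx'1, hx'2⟩ := hx'
  set P : ℤ → ℝ := fun m => Real.exp (-(x - x' + 2 * m * L) ^ 2 / (2 * β)) with hP_def
  set N : ℤ → ℝ := fun m => Real.exp (-(x + x' - 2 * m * L - L) ^ 2 / (2 * β)) with hN_def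
  have hP : Summable P := by
    have := summable_gaussZ (L := L) (β := β) (x - x') hL hβ
      (by rw [abs_le]; constructor <;> linarith)
    simpa [hP_def] using this
  have hN : Summable N := by
    have h1 := (summable_gaussZ (L := L) (β := β) (x + x' - L) hL hβ
      (by rw [abs_le]; constructor <;> linarith)).comp_injective neg_injective
    apply h1.congr
    intro m
    simp only [Function.comp_apply, hN_def]
    congr 2
    push_cast
    ring
  -- the generic fact P 0 bounds things
  have hNpos : ∀ m, 0 ≤ N m := fun m => (Real.exp_pos _).le
  have hPpos : ∀ m, 0 ≤ P m := fun m => (Real.exp_pos _).le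
  -- upper bound : ∑ P ≤ P 0 + ∑ N
  have hsplitP := Summable.tsum_subtype_add_tsum_subtype_compl hP ({0} : Set ℤ)
  rw [tsum_singleton 0 P] at hsplitP
  have hupper : ∑' m, P m ≤ P 0 + ∑' m, N m := by
    have hcomp : (∑' m : ↑(({0} : Set ℤ)ᶜ), P m) ≤ ∑' m, N m := by
      refine Summable.tsum_le_tsum_of_inj (f := fun m : ↑(({0} : Set ℤ)ᶜ) => P ↑m) (g := N)
        (fun m => if 1 ≤ (m : ℤ) then (m : ℤ) - 1 else (m : ℤ)) ?_ ?_ ?_ ?_ ?_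
      · intro a b h
        have ha := a.2
        have hb := b.2
        rw [Set.mem_compl_iff, Set.mem_singleton_iff] at ha hb
        simp only at h
        apply Subtype.ext
        split_ifs at h <;> omega
      · exact fun c _ => hNpos c
      · rintro ⟨m, hm⟩
        simp only [Set.mem_compl_iff, Set.mem_singleton_iff] at hm
        simp only
        split_ifs with h
        · -- m ≥ 1 : P m ≤ N (m - 1)
          apply exp_term_le hβ
          have ht : (1:ℝ) ≤ (m:ℝ) := by exact_mod_cast h
          push_cast
          nlinarith [mul_pos (show (0:ℝ) < 2*x + L by linarith)
            (show (0:ℝ) < 4*(m:ℝ)*L - L - 2*x' by nlinarith [mul_nonneg (show (0:ℝ) ≤ 4*L by linarith) (show (0:ℝ) ≤ (m:ℝ) - 1 by linarith)])]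
        · -- m ≤ -1 : P m ≤ N m
          have hm1 : m ≤ -1 := by omega
          apply exp_term_le hβ
          have ht : (m:ℝ) ≤ -1 := by exact_mod_cast hm1
          nlinarith [mul_pos (show (0:ℝ) < L - 2*x by linarith)
            (show (0:ℝ) < 2*x' - 4*(m:ℝ)*L - L by nlinarith [mul_nonneg (show (0:ℝ) ≤ 4*L by linarith) (show (0:ℝ) ≤ -(m:ℝ) - 1 by linarith)])]
      · exact hP.subtype _
      · exact hN
    linarith
  -- lower bound : ∑ N ≤ P 0 + ∑ P
  have hsplitN := Summable.tsum_subtype_add_tsum_subtype_compl hN ({0} : Set ℤ)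
  rw [tsum_singleton 0 N] at hsplitN
  have hN0 : N 0 ≤ P 0 := by
    apply exp_term_le hβ
    push_cast
    nlinarith [mul_pos (show (0:ℝ) < L - 2*x by linarith) (show (0:ℝ) < L - 2*x' by linarith)]
  have hlower : ∑' m, N m ≤ P 0 + ∑' m, P m := by
    have hcomp : (∑' m : ↑(({0} : Set ℤ)ᶜ), N m) ≤ ∑' m, P m := by
      refine Summable.tsum_le_tsum_of_inj (f := fun m : ↑(({0} : Set ℤ)ᶜ) => N ↑m) (g := P)
        (fun m => if 1 ≤ (m : ℤ) then (m : ℤ) else (m : ℤ) + 1) ?_ ?_ ?_ ?_ ?_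
      · intro a b h
        have ha := a.2
        have hb := b.2
        rw [Set.mem_compl_iff, Set.mem_singleton_iff] at ha hb
        simp only at h
        apply Subtype.ext
        split_ifs at h <;> omega
      · exact fun c _ => hPpos c
      · rintro ⟨m, hm⟩
        simp only [Set.mem_compl_iff, Set.mem_singleton_iff] at hm
        simp only
        split_ifs with h
        · -- m ≥ 1 : N m ≤ P m
          apply exp_term_le hβ
          have ht : (1:ℝ) ≤ (m:ℝ) := by exact_mod_cast h
          nlinarith [mul_pos (show (0:ℝ) < L - 2*x by linarith)
            (show (0:ℝ) < 4*(m:ℝ)*L + L - 2*x' by nlinarith [mul_nonneg (show (0:ℝ) ≤ 4*L by linarith) (show (0:ℝ) ≤ (m:ℝ) - 1 by linarith)])]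
        · -- m ≤ -1 : N m ≤ P (m+1)
          have hm1 : m ≤ -1 := by omega
          apply exp_term_le hβ
          have ht : (m:ℝ) ≤ -1 := by exact_mod_cast hm1
          push_cast
          nlinarith [mul_nonneg (show (0:ℝ) ≤ 2*x + L by linarith)
            (show (0:ℝ) ≤ 2*x' - 4*(m:ℝ)*L - 3*L by nlinarith [mul_nonneg (show (0:ℝ) ≤ 4*L by linarith) (show (0:ℝ) ≤ -(m:ℝ) - 1 by linarith)])]
      · exact hN.subtype _
      · exact hP
    linarith
  -- combine
  have habs : |∑' m, (P m - N m)| ≤ P 0 := by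
    rw [Summable.tsum_sub hP hN, abs_le]
    constructor <;> linarith
  have hP0 : P 0 = Real.exp (-(x - x') ^ 2 / (2 * β)) := by
    simp only [hP_def]
    norm_num
  rw [g0L, abs_mul, abs_of_pos (by positivity : (0:ℝ) < (2 * π * β) ^ (-(1/2) : ℝ))]
  apply mul_le_mul_of_nonneg_left _ (by positivity)
  rw [← hP0]
  exact habs

/-- Gaussian bound for the boundary remainder of the cube heat kernel:
`|Z_{0,L}(x, x'; β)| ≤ c₁ (1+β) G_{0,∞}(x, x'; c₂ β)`. -/
theorem stmt_10 :
    ∃ c₁ c₂ : ℝ, 0 < c₁ ∧ 0 < c₂ ∧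
      ∀ (L β : ℝ) (x x' : Fin 3 → ℝ), 1 ≤ L → 0 < β →
        (∀ j, x j ∈ Set.Ioo (-(L / 2)) (L / 2)) →
        (∀ j, x' j ∈ Set.Ioo (-(L / 2)) (L / 2)) →
          |Z0L L x x' β| ≤ c₁ * (1 + β) * G0inf x x' (c₂ * β) := by
  refine ⟨2, 1, two_pos, one_pos, ?_⟩
  intro L β x x' hL hβ hx hx'
  have hπβ : (0:ℝ) < 2 * π * β := by positivity
  have hGinf_pos : 0 < G0inf x x' β := by
    rw [G0inf]; positivity
  have hG : |G0L L x x' β| ≤ G0inf x x' β := by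
    rw [G0L, Finset.abs_prod]
    calc ∏ j, |g0L L (x j) (x' j) β|
        ≤ ∏ j : Fin 3, ((2 * π * β) ^ (-(1/2) : ℝ) * Real.exp (-(x j - x' j) ^ 2 / (2 * β))) := by
          apply Finset.prod_le_prod (fun j _ => abs_nonneg _)
          exact fun j _ => g0L_abs_le (by linarith) hβ (hx j) (hx' j)
      _ = G0inf x x' β := by
          rw [Finset.prod_mul_distrib, Finset.prod_const, ← Real.exp_sum, G0inf]
          congr 1
          · rw [Finset.card_univ, Fintype.card_fin, ← Real.rpow_natCast ((2 * π * β) ^ (-(1/2):ℝ)) 3,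
              ← Real.rpow_mul hπβ.le]
            norm_num
          · congr 1
            rw [← Finset.sum_neg_distrib, ← Finset.sum_div]
  have hfinal : |Z0L L x x' β| ≤ 2 * G0inf x x' β := by
    rw [Z0L]
    calc |G0L L x x' β - G0inf x x' β| ≤ |G0L L x x' β| + |G0inf x x' β| := abs_sub _ _
      _ ≤ G0inf x x' β + G0inf x x' β := by
          rw [abs_of_pos hGinf_pos]; linarith
      _ = 2 * G0inf x x' β := by ring
  rw [one_mul]
  nlinarith [hfinal, hGinf_pos]
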